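/- The polynomial ring R = ℂ[x_1,…,x_n] is a free module of rank n! over its subalgebra Λ of symmetric polynomials. -/

import Mathlib

open MvPolynomial

open Finset Equiv

namespace ArtinFree

noncomputable section

variable {n : ℕ}

abbrev Rp (n : ℕ) := MvPolynomial (Fin n) ℂ

/-- Subalgebra of polys invariant under permutations fixing indices `≥ k`. -/
def B (n k : ℕ) : Subalgebra ℂ (Rp n) where
  carrier := {p | ∀ σ : Perm (Fin n), (∀ i : Fin n, k ≤ i.val → σ i = i) → rename σ p = p}
  algebraMap_mem' r σ _ := rename_C σ r
  mul_mem' ha hb σ hσ := by rw [map_mul, ha σ hσ, hb σ hσ]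
  add_mem' ha hb σ hσ := by rw [map_add, ha σ hσ, hb σ hσ]

lemma mem_B {k : ℕ} {p : Rp n} :
    p ∈ B n k ↔ ∀ σ : Perm (Fin n), (∀ i : Fin n, k ≤ i.val → σ i = i) → rename σ p = p :=
  Iff.rfl

lemma mem_B_top {p : Rp n} : p ∈ B n n ↔ p ∈ symmetricSubalgebra (Fin n) ℂ := by
  constructor
  · exact fun h e => h e (fun i hi => absurd hi (not_le.2 i.2))
  · exact fun h σ _ => h σ

lemma symm_mem_B {k : ℕ} {p : Rp n} (hp : p ∈ symmetricSubalgebra (Fin n) ℂ) : p ∈ B n k :=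
  fun σ _ => hp σ

/-- a permutation fixing indices `≥ k` maps indices `< k` to indices `< k`. -/
lemma perm_lt {k : ℕ} {σ : Perm (Fin n)} (hσ : ∀ i : Fin n, k ≤ i.val → σ i = i)
    {i : Fin n} (h : i.val < k) : (σ i).val < k := by
  by_contra hc
  push_neg at hc
  have := hσ _ hc
  have : σ i = σ (σ i) := this.symm
  have := σ.injective this
  omega

/-- ring homs commute with multiset esymm -/
lemma map_esymm' {S T : Type*} [CommRing S] [CommRing T] (f : S →+* T) (s : Multiset S)
    (m : ℕ) : f (s.esymm m) = (s.map f).esymm m := by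
  unfold Multiset.esymm
  rw [map_multiset_sum, Multiset.map_map, Multiset.powersetCard_map, Multiset.map_map]
  congr 1
  apply Multiset.map_congr rfl
  intro t _
  exact f.map_multiset_prod t

lemma esymm_cons {S : Type*} [CommRing S] (a : S) (s : Multiset S) (m : ℕ) :
    (a ::ₘ s).esymm (m + 1) = s.esymm (m + 1) + a * s.esymm m := by
  unfold Multiset.esymm
  rw [Multiset.powersetCard_cons, Multiset.map_add, Multiset.sum_add, Multiset.map_map]
  congr 1
  rw [← Multiset.sum_map_mul_left]
  apply congrArg
  apply Multiset.map_congr rfl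
  intro t _
  simp [Multiset.prod_cons]

/-- multiset of the first `k` variables -/
def u (n : ℕ) : ℕ → Multiset (Rp n)
  | 0 => 0
  | (k+1) => if h : k < n then X ⟨k, h⟩ ::ₘ u n k else u n k

lemma u_succ_of_lt {k : ℕ} (h : k < n) : u n (k+1) = X ⟨k, h⟩ ::ₘ u n k := by
  rw [u, dif_pos h]

lemma card_u {k : ℕ} (h : k ≤ n) : Multiset.card (u n k) = k := by
  induction k with
  | zero => rfl
  | succ m ih =>
    rw [u_succ_of_lt (by omega), Multiset.card_cons, ih (by omega)]

lemma u_eq (k : ℕ) : u n k = ((univ.filter (fun i : Fin n => i.val < k)).val.map X) := by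
  induction k with
  | zero => simp [u]
  | succ m ih =>
    by_cases h : m < n
    · rw [u_succ_of_lt h, ih]
      have hf : (univ.filter (fun i : Fin n => i.val < m + 1)) =
          insert ⟨m, h⟩ (univ.filter (fun i : Fin n => i.val < m)) := by
        ext j
        simp only [mem_filter, mem_univ, true_and, mem_insert]
        constructor
        · intro hj
          rcases Nat.lt_succ_iff_lt_or_eq.1 hj with h' | h'
          · exact Or.inr h'
          · exact Or.inl (by ext; exact h')
        · rintro (rfl | hj)
          · exact Nat.lt_succ_self m
          · omega
      rw [hf, Finset.insert_val_of_notMem (by simp), Multiset.map_cons]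
    · rw [u, dif_neg h, ih]
      congr 2
      apply Finset.filter_congr
      intro i _
      have := i.2
      constructor <;> intro <;> [omega; omega]

/-- the filtered set of small indices is preserved by a permutation fixing big indices -/
lemma filter_map_perm {k : ℕ} {σ : Perm (Fin n)} (hσ : ∀ i : Fin n, k ≤ i.val → σ i = i) :
    (univ.filter (fun i : Fin n => i.val < k)).val.map σ =
      (univ.filter (fun i : Fin n => i.val < k)).val := by
  have hsymm : ∀ i : Fin n, k ≤ i.val → σ.symm i = i := by
    intro i hi
    have := hσ i hi
    exact σ.symm_apply_eq.2 this.symm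
  have : Finset.map σ.toEmbedding (univ.filter (fun i : Fin n => i.val < k)) =
      univ.filter (fun i : Fin n => i.val < k) := by
    ext j
    simp only [Finset.mem_map_equiv, mem_filter, mem_univ, true_and]
    constructor
    · intro hj
      by_contra hc
      push_neg at hc
      rw [hsymm j hc] at hj
      omega
    · intro hj
      exact perm_lt hsymm hj
  conv_rhs => rw [← this]
  rfl

lemma map_rename_u {k : ℕ} {σ : Perm (Fin n)} (hσ : ∀ i : Fin n, k ≤ i.val → σ i = i) :
    (u n k).map (rename σ) = u n k := by
  rw [u_eq, Multiset.map_map]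
  have : (rename (σ : Fin n → Fin n)) ∘ (X : Fin n → Rp n) = X ∘ σ := by
    funext i; simp [rename_X]
  rw [this, ← Multiset.map_map, filter_map_perm hσ]

lemma esymm_u_mem_B {k m : ℕ} : (u n k).esymm m ∈ B n k := by
  intro σ hσ
  have : (rename (σ : Fin n → Fin n)) ((u n k).esymm m)
      = ((u n k).map (rename σ)).esymm m := map_esymm' _ _ _
  rw [this, map_rename_u hσ]

lemma esymm_u_neg_mem_B {k m : ℕ} : ((u n k).map Neg.neg).esymm m ∈ B n k := by
  intro σ hσ
  have : (rename (σ : Fin n → Fin n)) (((u n k).map Neg.neg).esymm m)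
      = (((u n k).map Neg.neg).map (rename σ)).esymm m := map_esymm' _ _ _
  rw [this, Multiset.map_map]
  have : (rename (σ : Fin n → Fin n)) ∘ (Neg.neg : Rp n → Rp n) =
      Neg.neg ∘ (rename (σ : Fin n → Fin n)) := by
    funext p; simp
  rw [this, ← Multiset.map_map, map_rename_u hσ]

lemma esymm_zero' {S : Type*} [CommRing S] (s : Multiset S) : s.esymm 0 = 1 := by
  simp [Multiset.esymm, Multiset.powersetCard_zero_left]

section Step

variable {k : ℕ} (hk : k < n)

/-- Key consequence of Vieta: the `(k+1)`-st power of `x_k` is a combination of lower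
powers with coefficients symmetric in the first `k+1` variables. -/
lemma vieta_pow :
    (X ⟨k, hk⟩ : Rp n) ^ (k+1) =
      ∑ j ∈ range (k+1),
        (-(((u n (k+1)).map Neg.neg).esymm (k+1-j))) * (X ⟨k, hk⟩ : Rp n) ^ j := by
  set xk : Rp n := X ⟨k, hk⟩ with hxk
  set v : Multiset (Rp n) := (u n (k+1)).map Neg.neg with hv
  have hcard : Multiset.card v = k + 1 := by
    rw [hv, Multiset.card_map, card_u (by omega)]
  have hviet := Multiset.prod_X_add_C_eq_sum_esymm v
  have h0 : Polynomial.eval xk ((v.map fun r => Polynomial.X + Polynomial.C r)).prod = 0 := by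
    rw [← Polynomial.coe_evalRingHom, map_multiset_prod]
    apply Multiset.prod_eq_zero
    rw [Multiset.map_map]
    have : -xk ∈ v := by
      rw [hv]
      apply Multiset.mem_map_of_mem
      rw [u_succ_of_lt hk]
      exact Multiset.mem_cons_self _ _
    have h2 := Multiset.mem_map_of_mem
      ((Polynomial.evalRingHom xk) ∘ fun r => Polynomial.X + Polynomial.C r) this
    simpa using h2
  rw [hviet] at h0
  rw [hcard] at h0
  rw [← Polynomial.coe_evalRingHom, map_sum] at h0
  simp only [map_mul, map_pow, Polynomial.eval_C, Polynomial.eval_X,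
    Polynomial.coe_evalRingHom] at h0
  rw [Finset.sum_range_succ'] at h0
  have h0' : xk ^ (k + 1) = -∑ i ∈ range (k + 1), v.esymm (i + 1) * xk ^ (k + 1 - (i + 1)) := by
    rw [esymm_zero'] at h0
    simp only [Nat.sub_zero, one_mul] at h0
    linear_combination h0
  rw [h0']
  rw [← Finset.sum_range_reflect (fun j => (-(v.esymm (k+1-j))) * xk ^ j) (k+1)]
  rw [neg_eq_iff_eq_neg, ← Finset.sum_neg_distrib]
  apply Finset.sum_congr rfl
  intro j hj
  rw [Finset.mem_range] at hj
  have e1 : k + 1 - (k + 1 - 1 - j) = j + 1 := by omega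
  have e2 : k + 1 - (j + 1) = k + 1 - 1 - j := by omega
  rw [e1, e2]
  ring

/-- `p` is representable as `∑_{j ≤ k} c_j x_k^j` with coefficients in `B (k+1)`. -/
def RepR (hk : k < n) (p : Rp n) : Prop :=
  ∃ c : ℕ → Rp n, (∀ j, c j ∈ B n (k+1)) ∧
    p = ∑ j ∈ range (k+1), c j * (X ⟨k, hk⟩ : Rp n) ^ j

lemma repR_of_mem {b : Rp n} (hb : b ∈ B n (k+1)) : RepR hk b := by
  refine ⟨fun j => if j = 0 then b else 0, fun j => by dsimp only; split; exacts [hb, zero_mem _], ?_⟩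
  rw [Finset.sum_eq_single 0]
  · simp
  · intro j _ hj; simp [hj]
  · intro h; exact absurd (Finset.mem_range.2 (by omega)) h

lemma repR_zero : RepR hk (0 : Rp n) := repR_of_mem hk (zero_mem _)

lemma repR_one : RepR hk (1 : Rp n) := repR_of_mem hk (one_mem _)

lemma repR_add {p q : Rp n} (hp : RepR hk p) (hq : RepR hk q) : RepR hk (p + q) := by
  obtain ⟨c, hc, rfl⟩ := hp
  obtain ⟨d, hd, rfl⟩ := hq
  refine ⟨fun j => c j + d j, fun j => add_mem (hc j) (hd j), ?_⟩
  rw [← Finset.sum_add_distrib]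
  apply Finset.sum_congr rfl
  intro j _; ring

lemma repR_neg {p : Rp n} (hp : RepR hk p) : RepR hk (-p) := by
  obtain ⟨c, hc, rfl⟩ := hp
  refine ⟨fun j => -(c j), fun j => neg_mem (hc j), ?_⟩
  rw [← Finset.sum_neg_distrib]
  apply Finset.sum_congr rfl
  intro j _; ring

lemma repR_smulB {b p : Rp n} (hb : b ∈ B n (k+1)) (hp : RepR hk p) : RepR hk (b * p) := by
  obtain ⟨c, hc, rfl⟩ := hp
  refine ⟨fun j => b * c j, fun j => mul_mem hb (hc j), ?_⟩
  rw [Finset.mul_sum]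
  apply Finset.sum_congr rfl
  intro j _; ring

lemma repR_xk_mul {p : Rp n} (hp : RepR hk p) : RepR hk ((X ⟨k, hk⟩ : Rp n) * p) := by
  obtain ⟨c, hc, rfl⟩ := hp
  set xk : Rp n := X ⟨k, hk⟩ with hxk
  set e : ℕ → Rp n := fun j => -(((u n (k+1)).map Neg.neg).esymm (k+1-j)) with he
  refine ⟨fun j => (if j = 0 then 0 else c (j-1)) + c k * e j, ?_, ?_⟩
  · intro j
    apply add_mem
    · split
      · exact zero_mem _
      · exact hc _
    · exact mul_mem (hc k) (neg_mem esymm_u_neg_mem_B)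
  · rw [Finset.mul_sum]
    have lhs : ∑ j ∈ range (k+1), xk * (c j * xk ^ j)
        = (∑ j ∈ range k, c j * xk ^ (j+1)) + c k * xk ^ (k+1) := by
      have : ∀ j, xk * (c j * xk ^ j) = c j * xk ^ (j+1) := by intro j; ring
      simp_rw [this]
      rw [Finset.sum_range_succ]
    rw [lhs]
    have rhs : ∑ j ∈ range (k+1), ((if j = 0 then 0 else c (j-1)) + c k * e j) * xk ^ j
        = (∑ j ∈ range (k+1), (if j = 0 then 0 else c (j-1)) * xk ^ j)
          + c k * ∑ j ∈ range (k+1), e j * xk ^ j := by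
      rw [Finset.mul_sum, ← Finset.sum_add_distrib]
      apply Finset.sum_congr rfl
      intro j _; ring
    rw [rhs, ← vieta_pow hk]
    congr 1
    rw [Finset.sum_range_succ']
    simp

lemma repR_pow_mul {p : Rp n} (m : ℕ) (hp : RepR hk p) :
    RepR hk ((X ⟨k, hk⟩ : Rp n) ^ m * p) := by
  induction m with
  | zero => simpa using hp
  | succ m ih =>
    have : (X ⟨k, hk⟩ : Rp n) ^ (m+1) * p = X ⟨k, hk⟩ * ((X ⟨k, hk⟩ : Rp n) ^ m * p) := by
      ring
    rw [this]
    exact repR_xk_mul hk ih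

lemma repR_sum {ι : Type*} (s : Finset ι) (f : ι → Rp n) (h : ∀ i ∈ s, RepR hk (f i)) :
    RepR hk (∑ i ∈ s, f i) := by
  classical
  induction s using Finset.induction_on with
  | empty => simpa using repR_zero hk
  | insert _ _ hnotmem ih =>
    rw [Finset.sum_insert hnotmem]
    exact repR_add hk (h _ (Finset.mem_insert_self _ _))
      (ih fun i hi => h i (Finset.mem_insert_of_mem hi))

lemma repR_mul {p q : Rp n} (hp : RepR hk p) (hq : RepR hk q) : RepR hk (p * q) := by
  obtain ⟨c, hc, rfl⟩ := hp
  rw [Finset.sum_mul]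
  apply repR_sum
  intro j _
  have : c j * (X ⟨k, hk⟩ : Rp n) ^ j * q = c j * ((X ⟨k, hk⟩ : Rp n) ^ j * q) := by ring
  rw [this]
  exact repR_smulB hk (hc j) (repR_pow_mul hk j hq)

lemma repR_esymm_u (m : ℕ) : RepR hk ((u n k).esymm m) := by
  induction m with
  | zero => rw [esymm_zero']; exact repR_one hk
  | succ m ih =>
    have hcons := esymm_cons (X ⟨k, hk⟩ : Rp n) (u n k) m
    rw [← u_succ_of_lt hk] at hcons
    have : (u n k).esymm (m+1)
        = (u n (k+1)).esymm (m+1) + -((X ⟨k, hk⟩ : Rp n) * (u n k).esymm m) := by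
      rw [hcons]; ring
    rw [this]
    exact repR_add hk (repR_of_mem hk esymm_u_mem_B) (repR_neg hk (repR_xk_mul hk ih))

/-- KEY 1: linear independence of the powers `x_k^0, …, x_k^k` over `B (k+1)`. -/
lemma key_indep (c : Fin (k+1) → Rp n) (hc : ∀ j, c j ∈ B n (k+1))
    (h : ∑ j : Fin (k+1), c j * (X ⟨k, hk⟩ : Rp n) ^ (j : ℕ) = 0) : ∀ j, c j = 0 := by
  classical
  set emb : Fin (k+1) → Fin n := fun i => ⟨i, by omega⟩ with hemb
  have hembinj : Function.Injective emb := by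
    intro a b hab
    simpa [hemb, Fin.ext_iff] using congrArg Fin.val hab
  have hrow : ∀ i : Fin (k+1), ∑ j : Fin (k+1), c j * (X (emb i) : Rp n) ^ (j : ℕ) = 0 := by
    intro i
    set τ : Perm (Fin n) := Equiv.swap (emb i) ⟨k, hk⟩ with hτ
    have hτfix : ∀ i' : Fin n, k + 1 ≤ i'.val → τ i' = i' := by
      intro i' hi'
      apply Equiv.swap_apply_of_ne_of_ne
      · intro hcon; rw [hcon] at hi'; simp [hemb] at hi'; omega
      · intro hcon; rw [hcon] at hi'; simp at hi'
    have := congrArg (rename (τ : Fin n → Fin n)) h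
    rw [map_sum, map_zero] at this
    convert this using 2 with j
    rw [map_mul, map_pow, rename_X, hc j τ hτfix]
    congr 2
    rw [hτ, Equiv.swap_apply_right]
  set A : Matrix (Fin (k+1)) (Fin (k+1)) (Rp n) :=
    Matrix.vandermonde (fun i => (X (emb i) : Rp n)) with hA
  have hmv : A.mulVec c = 0 := by
    funext i
    rw [Matrix.mulVec, Pi.zero_apply, ← hrow i]
    apply Finset.sum_congr rfl
    intro j _
    show Matrix.vandermonde (fun i => (X (emb i) : Rp n)) i j * c j = _
    rw [Matrix.vandermonde_apply]
    ring
  have hsmul : A.det • c = 0 := by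
    have h1 : A.adjugate.mulVec (A.mulVec c) = 0 := by rw [hmv, Matrix.mulVec_zero]
    rw [Matrix.mulVec_mulVec, Matrix.adjugate_mul, Matrix.smul_mulVec,
      Matrix.one_mulVec] at h1
    exact h1
  have hdet : A.det ≠ 0 := by
    rw [hA, Matrix.det_vandermonde]
    apply Finset.prod_ne_zero_iff.2
    intro i _
    apply Finset.prod_ne_zero_iff.2
    intro j hj
    rw [Finset.mem_Ioi] at hj
    apply sub_ne_zero.2
    intro hXeq
    exact absurd (hembinj (X_injective hXeq)) (ne_of_gt hj)
  intro j
  have := congrFun hsmul j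
  rw [Pi.smul_apply, Pi.zero_apply, smul_eq_mul] at this
  rcases mul_eq_zero.1 this with h' | h'
  · exact absurd h' hdet
  · exact h'

end Step

section Transport

variable {k : ℕ} (hk : k < n)

/-- coefficient ring: polynomials in the variables `x_i`, `i ≥ k`. -/
abbrev Amb (n k : ℕ) := MvPolynomial {i : Fin n // ¬ i.val < k} ℂ

abbrev SgT (n k : ℕ) := {i : Fin n // i.val < k}

/-- The isomorphism `ℂ[x_{<k}][x_{≥k}] ≃ ℂ[x]`. -/
def EE (n k : ℕ) : MvPolynomial (SgT n k) (Amb n k) ≃ₐ[ℂ] Rp n :=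
  ((sumAlgEquiv ℂ (SgT n k) {i : Fin n // ¬ i.val < k}).symm.trans
    (renameEquiv ℂ (Equiv.sumCompl (fun i : Fin n => i.val < k))))

lemma EE_apply (q : MvPolynomial (SgT n k) (Amb n k)) :
    EE n k q = rename (Equiv.sumCompl (fun i : Fin n => i.val < k))
      (iterToSum ℂ (SgT n k) {i : Fin n // ¬ i.val < k} q) := by
  change rename (Equiv.sumCompl (fun i : Fin n => i.val < k))
    ((sumAlgEquiv ℂ (SgT n k) {i : Fin n // ¬ i.val < k}).symm q) = _
  congr 1
  induction q using MvPolynomial.induction_on with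
  | C a =>
    induction a using MvPolynomial.induction_on with
    | C c => simp [iterToSum_C_C]
    | add p q hp hq => simp only [C_add, map_add, hp, hq]
    | mul_X p j hp => simp only [C_mul, map_mul, hp]; simp [iterToSum_C_X]
  | add p q hp hq => simp only [map_add, hp, hq]
  | mul_X p j hp => simp only [map_mul, hp]; simp [iterToSum_X]

lemma EE_X (i : SgT n k) : EE n k (X i) = X i.1 := by
  rw [EE_apply, iterToSum_X, rename_X, Equiv.sumCompl_apply_inl]

lemma EE_C (a : Amb n k) : EE n k (C a) = rename (Subtype.val) a := by
  have : (EE n k).toAlgHom.toRingHom.comp (C : Amb n k →+* MvPolynomial (SgT n k) (Amb n k))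
      = (rename (Subtype.val : {i : Fin n // ¬ i.val < k} → Fin n)).toRingHom := by
    apply ringHom_ext
    · intro c
      simp only [RingHom.comp_apply, AlgHom.toRingHom_eq_coe, RingHom.coe_coe,
        AlgEquiv.toAlgHom_eq_coe, AlgHom.coe_coe]
      rw [show ((C : Amb n k →+* _) (C c)) = C (C c) from rfl]
      change EE n k (C (C c)) = _
      rw [EE_apply, iterToSum_C_C, rename_C, rename_C]
    · intro j
      simp only [RingHom.comp_apply, AlgHom.toRingHom_eq_coe, RingHom.coe_coe,
        AlgEquiv.toAlgHom_eq_coe, AlgHom.coe_coe]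
      rw [show ((C : Amb n k →+* _) (X j)) = C (X j) from rfl]
      change EE n k (C (X j)) = _
      rw [EE_apply, iterToSum_C_X, rename_X, rename_X, Equiv.sumCompl_apply_inr]
  exact RingHom.congr_fun this a

/-- extension of a permutation of small indices to `Fin n`, fixing big indices -/
def ebar (e : Perm (SgT n k)) : Perm (Fin n) :=
  (Equiv.sumCompl (fun i : Fin n => i.val < k)).permCongr
    (Equiv.sumCongr e (Equiv.refl {i : Fin n // ¬ i.val < k}))

lemma ebar_fix (e : Perm (SgT n k)) : ∀ i : Fin n, k ≤ i.val → ebar e i = i := by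
  intro i hi
  have hni : ¬ i.val < k := not_lt.2 hi
  rw [ebar, Equiv.permCongr_apply, Equiv.sumCompl_symm_apply_of_neg (p := fun i : Fin n => i.val < k) hni]
  simp

lemma ebar_small (e : Perm (SgT n k)) (i : SgT n k) : ebar e i.1 = (e i).1 := by
  rw [ebar, Equiv.permCongr_apply, Equiv.sumCompl_symm_apply_of_pos (p := fun i : Fin n => i.val < k) i.2]
  simp

lemma EE_intertwine (e : Perm (SgT n k)) (q : MvPolynomial (SgT n k) (Amb n k)) :
    EE n k (rename (e : SgT n k → SgT n k) q) = rename (ebar e : Fin n → Fin n) (EE n k q) := by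
  have : ((EE n k).toAlgHom.toRingHom.comp
      (rename (e : SgT n k → SgT n k)).toRingHom :
        MvPolynomial (SgT n k) (Amb n k) →+* Rp n)
      = (rename (ebar e : Fin n → Fin n)).toRingHom.comp (EE n k).toAlgHom.toRingHom := by
    apply ringHom_ext
    · intro a
      simp only [RingHom.comp_apply, AlgHom.toRingHom_eq_coe, RingHom.coe_coe,
        AlgEquiv.toAlgHom_eq_coe, AlgHom.coe_coe]
      change EE n k (rename _ (C a)) = rename _ (EE n k (C a))
      rw [rename_C, EE_C, rename_rename]
      have hcomp : ((ebar e : Fin n → Fin n) ∘ (Subtype.val : {i : Fin n // ¬ i.val < k} → Fin n))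
          = Subtype.val := by
        funext j
        exact ebar_fix e j.1 (not_lt.1 j.2)
      rw [hcomp]
    · intro i
      simp only [RingHom.comp_apply, AlgHom.toRingHom_eq_coe, RingHom.coe_coe,
        AlgEquiv.toAlgHom_eq_coe, AlgHom.coe_coe]
      change EE n k (rename _ (X i)) = rename _ (EE n k (X i))
      rw [rename_X, EE_X, EE_X, rename_X, ebar_small]
  exact RingHom.congr_fun this q

lemma EE_esymm (m : ℕ) : EE n k (esymm (SgT n k) (Amb n k) m) = (u n k).esymm m := by
  rw [esymm]
  rw [map_sum]
  have : ∀ t : Finset (SgT n k), EE n k (∏ i ∈ t, X i) = t.prod (fun i => (X i.1 : Rp n)) := by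
    intro t
    rw [map_prod]
    exact Finset.prod_congr rfl fun i _ => EE_X i
  simp_rw [this]
  rw [← Finset.esymm_map_val (fun i : SgT n k => (X i.1 : Rp n)) univ m]
  rw [u_eq]
  congr 1
  have h1 : (univ.filter (fun i : Fin n => i.val < k))
      = (univ.subtype (fun i : Fin n => i.val < k)).map
          (Function.Embedding.subtype _) := (Finset.subtype_map _).symm
  rw [h1, Finset.subtype_univ, Finset.map_val, Multiset.map_map]
  rfl

lemma repR_xk : RepR hk (X ⟨k, hk⟩ : Rp n) := by
  have := repR_xk_mul hk (repR_one hk)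
  simpa using this

lemma X_big_mem_B {i : Fin n} (hi : k + 1 ≤ i.val) : (X i : Rp n) ∈ B n (k+1) := by
  intro σ hσ
  rw [rename_X, hσ i hi]

lemma repR_X_ge {i : Fin n} (hi : ¬ i.val < k) : RepR hk (X i : Rp n) := by
  rcases Nat.lt_or_ge k i.val with h' | h'
  · exact repR_of_mem hk (X_big_mem_B (by omega))
  · have : i = ⟨k, hk⟩ := by
      apply Fin.ext
      simp only []
      omega
    rw [this]
    exact repR_xk hk

lemma repR_rename_val (a : Amb n k) :
    RepR hk (rename (Subtype.val : {i : Fin n // ¬ i.val < k} → Fin n) a) := by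
  induction a using MvPolynomial.induction_on with
  | C c =>
    rw [rename_C]
    exact repR_of_mem hk ((B n (k+1)).algebraMap_mem c)
  | add p q hp hq =>
    rw [map_add]
    exact repR_add hk hp hq
  | mul_X p j hp =>
    rw [map_mul, rename_X]
    exact repR_mul hk hp (repR_X_ge hk j.2)

/-- KEY 2: every polynomial invariant under permutations of the first `k` indices is
representable as a `B (k+1)`-combination of powers of `x_k`. -/
lemma key_span {p : Rp n} (hp : p ∈ B n k) : RepR hk p := by
  classical
  set q : MvPolynomial (SgT n k) (Amb n k) := (EE n k).symm p with hq
  have hEq : EE n k q = p := (EE n k).apply_symm_apply p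
  have hq_symm : q ∈ symmetricSubalgebra (SgT n k) (Amb n k) := by
    intro e
    apply (EE n k).injective
    rw [EE_intertwine, hEq]
    exact hp (ebar e) (ebar_fix e)
  have hcard : Fintype.card (SgT n k) ≤ k := by
    have : Fintype.card (SgT n k) = k := by
      have e0 : SgT n k ≃ Fin k :=
        ⟨fun i => ⟨i.1.val, i.2⟩, fun j => ⟨⟨j.1, by omega⟩, j.2⟩,
          fun i => by ext; rfl, fun j => by ext; rfl⟩
      rw [Fintype.card_congr e0, Fintype.card_fin]
    omega
  obtain ⟨q₀, hq₀⟩ := esymmAlgHom_surjective (Amb n k) (σ := SgT n k) (n := k) hcard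
    ⟨q, hq_symm⟩
  have hqval : q = aeval (fun i : Fin k => esymm (SgT n k) (Amb n k) (i + 1)) q₀ := by
    have := esymmAlgHom_apply (σ := SgT n k) (R := Amb n k) q₀
    rw [hq₀] at this
    rw [show ((⟨q, hq_symm⟩ : symmetricSubalgebra (SgT n k) (Amb n k)) :
      MvPolynomial (SgT n k) (Amb n k)) = q from rfl] at this
    exact this
  have main : ∀ q₁ : MvPolynomial (Fin k) (Amb n k),
      RepR hk (EE n k (aeval (fun i : Fin k => esymm (SgT n k) (Amb n k) (i + 1)) q₁)) := by
    intro q₁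
    induction q₁ using MvPolynomial.induction_on with
    | C a =>
      rw [aeval_C]
      have : algebraMap (Amb n k) (MvPolynomial (SgT n k) (Amb n k)) a = C a := rfl
      rw [this, EE_C]
      exact repR_rename_val hk a
    | add p₁ q₁ hp₁ hq₁ =>
      rw [map_add, map_add]
      exact repR_add hk hp₁ hq₁
    | mul_X p₁ i hp₁ =>
      rw [map_mul, aeval_X, map_mul, EE_esymm]
      exact repR_mul hk hp₁ (repR_esymm_u hk _)
  have := main q₀
  rw [← hqval, hEq] at this
  exact this

/-- Fin-indexed version of `key_span`. -/
lemma key_span' {p : Rp n} (hp : p ∈ B n k) :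
    ∃ c : Fin (k+1) → Rp n, (∀ j, c j ∈ B n (k+1)) ∧
      p = ∑ j : Fin (k+1), c j * (X ⟨k, hk⟩ : Rp n) ^ (j : ℕ) := by
  obtain ⟨c, hc, hrep⟩ := key_span hk hp
  refine ⟨fun j => c j, fun j => hc j, ?_⟩
  rw [hrep, ← Fin.sum_univ_eq_sum_range (fun j => c j * (X ⟨k, hk⟩ : Rp n) ^ j) (k+1)]

end Transport

section Master

/-- exponent vectors allowed at stage `k`: `β i ≤ i`, and `β i = 0` for `i < k`. -/
def OKd (k : ℕ) (β : Fin n → ℕ) : Prop :=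
  (∀ i : Fin n, β i ≤ i.val) ∧ (∀ i : Fin n, i.val < k → β i = 0)

/-- the monomial `∏ xᵢ^{βᵢ}` -/
def mono (β : Fin n → ℕ) : Rp n := ∏ i : Fin n, (X i : Rp n) ^ β i

lemma mono_zero : mono (n := n) (fun _ => 0) = 1 := by simp [mono]

lemma mono_mem_B {m : ℕ} {β : Fin n → ℕ} (hβ : ∀ i : Fin n, i.val < m → β i = 0) :
    mono β ∈ B n m := by
  intro σ hσ
  have hσsymm : ∀ i : Fin n, m ≤ i.val → σ.symm i = i := by
    intro i hi
    exact σ.symm_apply_eq.2 (hσ i hi).symm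
  rw [mono, map_prod]
  simp_rw [map_pow, rename_X]
  rw [show (∏ i : Fin n, (X (σ i) : Rp n) ^ β i)
      = ∏ i : Fin n, ((fun j => (X j : Rp n) ^ β (σ.symm j)) (σ i)) by
    apply Finset.prod_congr rfl
    intro i _
    simp]
  rw [Equiv.prod_comp σ (fun j => (X j : Rp n) ^ β (σ.symm j))]
  apply Finset.prod_congr rfl
  intro j _
  congr 1
  rcases Nat.lt_or_ge j.val m with h' | h'
  · rw [hβ _ h', hβ _ (perm_lt hσsymm h')]
  · rw [hσsymm j h']

lemma mono_update {β : Fin n → ℕ} {t : Fin n} (hβt : β t = 0) (m : ℕ) :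
    mono (Function.update β t m) = mono β * (X t : Rp n) ^ m := by
  rw [mono, ← Finset.mul_prod_erase univ _ (mem_univ t), Function.update_self]
  rw [mono, ← Finset.mul_prod_erase univ (fun i => (X i : Rp n) ^ β i) (mem_univ t), hβt]
  have : ∀ i ∈ univ.erase t, (X i : Rp n) ^ (Function.update β t m i) = (X i : Rp n) ^ β i := by
    intro i hi
    rw [Function.update_of_ne (Finset.mem_erase.1 hi).1]
  rw [Finset.prod_congr rfl this]
  ring

/-- independence statement at stage `k` -/
def IndepS (n k : ℕ) : Prop :=
  ∀ s : Finset (Fin n → ℕ), (∀ β ∈ s, OKd k β) →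
    ∀ lam : (Fin n → ℕ) → symmetricSubalgebra (Fin n) ℂ,
      (∑ β ∈ s, lam β • mono β = 0) → ∀ β ∈ s, lam β = 0

/-- spanning statement at stage `k` -/
def SpanS (n k : ℕ) : Prop :=
  ∀ p : Rp n, p ∈ B n k →
    p ∈ Submodule.span (symmetricSubalgebra (Fin n) ℂ)
      {q : Rp n | ∃ β, OKd k β ∧ q = mono β}

lemma smul_coe (a : symmetricSubalgebra (Fin n) ℂ) (x : Rp n) : a • x = (a : Rp n) * x := rfl

lemma indepS_base : IndepS n n := by
  intro s hs lam hsum β hβ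
  have hsub : s ⊆ {fun _ => 0} := by
    intro γ hγ
    rw [Finset.mem_singleton]
    exact funext fun i => (hs γ hγ).2 i i.2
  rcases Finset.subset_singleton_iff.1 hsub with rfl | hs0
  · exact absurd hβ (Finset.notMem_empty β)
  · rw [hs0] at hsum hβ
    rw [Finset.sum_singleton, mono_zero] at hsum
    have : ((lam (fun _ => 0) : Rp n)) = 0 := by
      rw [smul_coe, mul_one] at hsum
      exact hsum
    have hz : lam (fun _ => 0) = 0 := Subtype.ext this
    rw [Finset.mem_singleton] at hβ
    rw [hβ, hz]

lemma spanS_base : SpanS n n := by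
  intro p hp
  have hmem : (1 : Rp n) ∈ {q : Rp n | ∃ β, OKd n β ∧ q = mono β} := by
    exact ⟨fun _ => 0, ⟨fun i => Nat.zero_le _, fun _ _ => rfl⟩, mono_zero.symm⟩
  have h1 : (1 : Rp n) ∈ Submodule.span (symmetricSubalgebra (Fin n) ℂ)
      {q : Rp n | ∃ β, OKd n β ∧ q = mono β} := Submodule.subset_span hmem
  have := Submodule.smul_mem _ (⟨p, mem_B_top.1 hp⟩ : symmetricSubalgebra (Fin n) ℂ) h1
  rwa [smul_coe, mul_one] at this

lemma spanS_step {k : ℕ} (hk : k < n) (ih : SpanS n (k+1)) : SpanS n k := by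
  intro p hp
  obtain ⟨c, hc, rfl⟩ := key_span' hk hp
  apply Submodule.sum_mem
  intro j _
  suffices haux : ∀ x : Rp n, x ∈ Submodule.span (symmetricSubalgebra (Fin n) ℂ)
      {q : Rp n | ∃ β, OKd (k+1) β ∧ q = mono β} →
      x * (X ⟨k, hk⟩ : Rp n) ^ (j : ℕ) ∈ Submodule.span (symmetricSubalgebra (Fin n) ℂ)
        {q : Rp n | ∃ β, OKd k β ∧ q = mono β} by
    exact haux (c j) (ih (c j) (hc j))
  intro x hx
  induction hx using Submodule.span_induction with
  | mem x hx =>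
    obtain ⟨β, hβ, rfl⟩ := hx
    apply Submodule.subset_span
    refine ⟨Function.update β ⟨k, hk⟩ (j : ℕ), ⟨?_, ?_⟩, ?_⟩
    · intro i
      rcases eq_or_ne i ⟨k, hk⟩ with rfl | hne
      · rw [Function.update_self]
        exact Nat.lt_succ_iff.1 j.2
      · rw [Function.update_of_ne hne]
        exact hβ.1 i
    · intro i hi
      have hne : i ≠ ⟨k, hk⟩ := by
        intro h
        rw [h] at hi
        exact absurd hi (lt_irrefl _)
      rw [Function.update_of_ne hne]
      exact hβ.2 i (by omega)
    · rw [mono_update (hβ.2 ⟨k, hk⟩ (Nat.lt_succ_self k : ((⟨k, hk⟩ : Fin n) : ℕ) < k + 1)) (j : ℕ)]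
  | zero => rw [zero_mul]; exact Submodule.zero_mem _
  | add x y hx hy ihx ihy => rw [add_mul]; exact Submodule.add_mem _ ihx ihy
  | smul a x hx ihx => rw [smul_mul_assoc]; exact Submodule.smul_mem _ a ihx

lemma indepS_step {k : ℕ} (hk : k < n) (ih : IndepS n (k+1)) : IndepS n k := by
  classical
  intro s hs lam hsum β₀ hβ₀
  have hkk : ((⟨k, hk⟩ : Fin n) : ℕ) = k := rfl
  set kk : Fin n := ⟨k, hk⟩ with hkkdef
  have hπlt : ∀ β : Fin n → ℕ, min (β kk) k < k + 1 := fun β => Nat.lt_succ_of_le (min_le_right _ _)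
  set π : (Fin n → ℕ) → Fin (k + 1) := fun β => ⟨min (β kk) k, hπlt β⟩ with hπ
  have hπval : ∀ β ∈ s, (π β : ℕ) = β kk := by
    intro β hβ
    have h1 : β kk ≤ k := (hs β hβ).1 kk
    show min (β kk) k = β kk
    omega
  set c : Fin (k + 1) → Rp n := fun j =>
    ∑ β ∈ s.filter (fun β => π β = j), (lam β : Rp n) * mono (Function.update β kk 0) with hc
  have hne_lt : ∀ (i : Fin n), i ≠ kk → i.val < k + 1 → i.val < k := by
    intro i hne hi
    have hvk : i.val ≠ k := fun h => hne (Fin.ext (show i.val = (kk : ℕ) from h))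
    omega
  have hcmem : ∀ j, c j ∈ B n (k + 1) := by
    intro j
    apply Subalgebra.sum_mem
    intro β hβ
    apply mul_mem (symm_mem_B (lam β).2)
    apply mono_mem_B
    intro i hi
    rcases eq_or_ne i kk with rfl | hne
    · rw [Function.update_self]
    · rw [Function.update_of_ne hne]
      exact (hs β (Finset.mem_filter.1 hβ).1).2 i (hne_lt i hne hi)
  have hfib : ∀ j (β : Fin n → ℕ), β ∈ s.filter (fun β => π β = j) →
      mono (Function.update β kk 0) * (X kk : Rp n) ^ (j : ℕ) = mono β := by
    intro j β hβ
    rw [Finset.mem_filter] at hβ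
    have hval : (j : ℕ) = β kk := by rw [← hβ.2]; exact hπval β hβ.1
    rw [← mono_update (by rw [Function.update_self]) (j : ℕ), Function.update_idem, hval,
      Function.update_eq_self]
  have hsum' : ∑ j : Fin (k + 1), c j * (X kk : Rp n) ^ (j : ℕ) = 0 := by
    rw [← hsum]
    have h1 : ∀ j : Fin (k + 1), c j * (X kk : Rp n) ^ (j : ℕ)
        = ∑ β ∈ s.filter (fun β => π β = j), (lam β : Rp n) * mono β := by
      intro j
      simp only [hc]
      rw [Finset.sum_mul]
      apply Finset.sum_congr rfl
      intro β hβ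
      rw [mul_assoc, hfib j β hβ]
    rw [show (∑ j : Fin (k + 1), c j * (X kk : Rp n) ^ (j : ℕ))
        = ∑ j : Fin (k + 1), ∑ β ∈ s.filter (fun β => π β = j), (lam β : Rp n) * mono β from
      Finset.sum_congr rfl fun j _ => h1 j]
    rw [Finset.sum_fiberwise s π (fun β => (lam β : Rp n) * mono β)]
    apply Finset.sum_congr rfl
    intro β _
    rw [smul_coe]
  have hczero := key_indep hk c hcmem hsum'
  have fiberkill : ∀ j : Fin (k + 1), ∀ β ∈ s.filter (fun β => π β = j), lam β = 0 := by
    intro j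
    have hvalmem : ∀ β ∈ s.filter (fun β => π β = j), (j : ℕ) = β kk := by
      intro β hβ
      rw [← (Finset.mem_filter.1 hβ).2]
      exact hπval β (Finset.mem_filter.1 hβ).1
    have hlam'eq : ∀ β ∈ s.filter (fun β => π β = j),
        lam (Function.update (Function.update β kk 0) kk (j : ℕ)) = lam β := by
      intro β hβ
      rw [Function.update_idem, hvalmem β hβ, Function.update_eq_self]
    have hinj : ∀ β ∈ s.filter (fun β => π β = j), ∀ γ ∈ s.filter (fun β => π β = j),
        Function.update β kk 0 = Function.update γ kk 0 → β = γ := by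
      intro β hβ γ hγ hed
      funext i
      rcases eq_or_ne i kk with rfl | hne
      · rw [← hvalmem β hβ, ← hvalmem γ hγ]
      · have := congrFun hed i
        simpa [Function.update_of_ne hne] using this
    have himage : ∑ γ ∈ (s.filter (fun β => π β = j)).image (fun β => Function.update β kk 0),
        lam (Function.update γ kk (j : ℕ)) • mono γ = 0 := by
      rw [Finset.sum_image hinj]
      have : ∑ β ∈ s.filter (fun β => π β = j),
          lam (Function.update (Function.update β kk 0) kk (j : ℕ))
            • mono (Function.update β kk 0) = c j := by
        simp only [hc]
        apply Finset.sum_congr rfl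
        intro β hβ
        rw [hlam'eq β hβ, smul_coe]
      rw [this, hczero j]
    have hOK : ∀ γ ∈ (s.filter (fun β => π β = j)).image (fun β => Function.update β kk 0),
        OKd (k + 1) γ := by
      intro γ hγ
      obtain ⟨β, hβ, rfl⟩ := Finset.mem_image.1 hγ
      constructor
      · intro i
        rcases eq_or_ne i kk with rfl | hne
        · rw [Function.update_self]; exact Nat.zero_le _
        · rw [Function.update_of_ne hne]; exact (hs β (Finset.mem_filter.1 hβ).1).1 i
      · intro i hi
        rcases eq_or_ne i kk with rfl | hne
        · rw [Function.update_self]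
        · rw [Function.update_of_ne hne]
          exact (hs β (Finset.mem_filter.1 hβ).1).2 i (hne_lt i hne hi)
    intro β hβ
    have := ih _ hOK (fun γ => lam (Function.update γ kk (j : ℕ))) himage
      (Function.update β kk 0) (Finset.mem_image_of_mem _ hβ)
    have h2 : lam (Function.update (Function.update β kk 0) kk (j : ℕ)) = 0 := this
    rw [hlam'eq β hβ] at h2
    exact h2
  exact fiberkill (π β₀) β₀ (Finset.mem_filter.2 ⟨hβ₀, rfl⟩)

lemma master : ∀ j : ℕ, j ≤ n → IndepS n (n - j) ∧ SpanS n (n - j) := by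
  intro j
  induction j with
  | zero => intro _; rw [Nat.sub_zero]; exact ⟨indepS_base, spanS_base⟩
  | succ j ihj =>
    intro hj
    have hj' : j ≤ n := by omega
    obtain ⟨ih1, ih2⟩ := ihj hj'
    have hk : n - (j+1) < n := by omega
    have heq : n - (j+1) + 1 = n - j := by omega
    constructor
    · exact indepS_step hk (by rw [heq]; exact ih1)
    · exact spanS_step hk (by rw [heq]; exact ih2)

lemma mem_B_zero (p : Rp n) : p ∈ B n 0 := by
  intro σ hσ
  have : ⇑σ = id := funext fun i => hσ i (Nat.zero_le _)
  rw [this, rename_id]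
  rfl

end Master

end

end ArtinFree


open ArtinFree

/-- `R = ℂ[x_1,…,x_n]` is a free module of rank `n!` over the
subalgebra `Λ` of symmetric polynomials. -/
theorem mvPolynomial_free_over_symmetric (n : ℕ) (hn : 1 ≤ n) :
    Module.Free (symmetricSubalgebra (Fin n) ℂ) (MvPolynomial (Fin n) ℂ) ∧
    Module.finrank (symmetricSubalgebra (Fin n) ℂ) (MvPolynomial (Fin n) ℂ) =
      Nat.factorial n := by
  classical
  obtain ⟨hindepS, hspanS⟩ := ArtinFree.master (n := n) n le_rfl
  rw [Nat.sub_self] at hindepS hspanS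
  set I := (∀ i : Fin n, Fin (i.val + 1)) with hI
  set toβ : I → (Fin n → ℕ) := fun α i => (α i : ℕ) with htoβ
  set v : I → Rp n := fun α => mono (toβ α) with hv
  have hinj : Function.Injective toβ := by
    intro a b hab
    funext i
    exact Fin.ext (congrFun hab i)
  have hli : LinearIndependent (symmetricSubalgebra (Fin n) ℂ) v := by
    rw [linearIndependent_iff']
    intro s g hsum α hα
    set lam : (Fin n → ℕ) → symmetricSubalgebra (Fin n) ℂ := fun β =>
      if h : ∀ i : Fin n, β i ≤ i.val then g (fun i => ⟨β i, Nat.lt_succ_of_le (h i)⟩)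
      else 0 with hlam
    have hlam_eq : ∀ a : I, lam (toβ a) = g a := by
      intro a
      have hcond : ∀ i : Fin n, toβ a i ≤ i.val := fun i => Nat.lt_succ_iff.1 (a i).2
      rw [hlam]
      simp only []
      rw [dif_pos hcond]
    have htoβinj : ∀ a ∈ s, ∀ b ∈ s, toβ a = toβ b → a = b := fun a _ b _ h => hinj h
    have hOK : ∀ β ∈ s.image toβ, OKd 0 β := by
      intro β hβ
      obtain ⟨a, _, rfl⟩ := Finset.mem_image.1 hβ
      exact ⟨fun i => Nat.lt_succ_iff.1 (a i).2, fun i h => absurd h (Nat.not_lt_zero _)⟩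
    have hsum' : ∑ β ∈ s.image toβ, lam β • mono β = 0 := by
      rw [Finset.sum_image htoβinj]
      rw [← hsum]
      apply Finset.sum_congr rfl
      intro a _
      rw [hlam_eq a]
    have := hindepS (s.image toβ) hOK lam hsum' (toβ α) (Finset.mem_image_of_mem _ hα)
    rw [hlam_eq α] at this
    exact this
  have hsp : ⊤ ≤ Submodule.span (symmetricSubalgebra (Fin n) ℂ) (Set.range v) := by
    intro p _
    have hp0 : p ∈ B n 0 := mem_B_zero p
    have h1 := hspanS p hp0
    have h2 : {q : Rp n | ∃ β, OKd 0 β ∧ q = mono β} ⊆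
        (Submodule.span (symmetricSubalgebra (Fin n) ℂ) (Set.range v) : Set (Rp n)) := by
      rintro q ⟨β, hβ, rfl⟩
      apply Submodule.subset_span
      refine ⟨fun i => ⟨β i, Nat.lt_succ_of_le (hβ.1 i)⟩, ?_⟩
      rw [hv]
    exact (Submodule.span_le.2 h2) h1
  let b : Module.Basis I (symmetricSubalgebra (Fin n) ℂ) (MvPolynomial (Fin n) ℂ) := Module.Basis.mk hli hsp
  have hnt : Nontrivial (symmetricSubalgebra (Fin n) ℂ) :=
    ⟨⟨0, 1, fun h => zero_ne_one (congrArg Subtype.val h)⟩⟩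
  refine ⟨Module.Free.of_basis b, ?_⟩
  rw [Module.finrank_eq_card_basis b]
  rw [Fintype.card_pi]
  simp only [Fintype.card_fin]
  rw [← Finset.prod_range_add_one_eq_factorial n]
  exact Fin.prod_univ_eq_prod_range (fun i => i + 1) n
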